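/- Let d ≥ 1, let 𝒞 be a symmetric positive definite d×d real matrix with B = 𝒞^{-1/2}, and let τ be a probability measure on the unit sphere 𝕊^{d-1} ⊂ ℝ^d. Set ρ = (1/2)·inf over unit vectors ζ ∈ ℝ^d of ∫_{𝕊^{d-1}} ⟨ζ, Bv/‖Bv‖⟩² dτ(v). Then for all x, x̃ ∈ ℝ^d, the synchronous coupling of two generalized Hit-and-Run transitions contracts: ( ∫_{𝕊^{d-1}} ‖Π_{Bv}(B(x - x̃))‖² dτ(v) )^{1/2} ≤ (1 - ρ)·‖B(x - x̃)‖. (Since under the synchronous coupling B(X - X̃) = Π_{Bv} B(x - x̃), this bounds the L²-Wasserstein distance, with respect to the metric |z|_{B} = ‖Bz‖, between the generalized Hit-and-Run transition distributions from x and from x̃ by (1-ρ)‖B(x-x̃)‖.) -/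

import Mathlib

open MeasureTheory
open scoped RealInnerProductSpace

/-- Wasserstein contraction of the synchronous coupling of generalized
Hit-and-Run for the Gaussian target `N(0,𝒞)`, with `B = 𝒞^{-1/2}`:
`(∫ ‖Π_{Bv}(B(x-xt))‖² dτ(v))^{1/2} ≤ (1-ρ)·‖B(x-xt)‖`. -/
theorem generalized_hit_and_run_contraction {d : ℕ} (hd : 1 ≤ d)
    (C B : Matrix (Fin d) (Fin d) ℝ) (hC : C.PosDef) (hB : B.PosDef)
    (hBC : B * B = C⁻¹)
    (τ : Measure (Metric.sphere (0 : EuclideanSpace ℝ (Fin d)) 1))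
    [IsProbabilityMeasure τ]
    (ρ : ℝ)
    (hρ : ρ = (1 / 2) * ⨅ ζ : {ζ : EuclideanSpace ℝ (Fin d) // ‖ζ‖ = 1},
        ∫ v, ⟪(ζ : EuclideanSpace ℝ (Fin d)),
            ‖Matrix.toEuclideanLin B ↑v‖⁻¹ • Matrix.toEuclideanLin B ↑v⟫ ^ 2 ∂τ)
    (x xt : EuclideanSpace ℝ (Fin d)) :
    Real.sqrt (∫ v, ‖Matrix.toEuclideanLin B (x - xt) -
        (⟪Matrix.toEuclideanLin B (x - xt), Matrix.toEuclideanLin B ↑v⟫ /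
            ‖Matrix.toEuclideanLin B ↑v‖ ^ 2) • Matrix.toEuclideanLin B ↑v‖ ^ 2 ∂τ) ≤
      (1 - ρ) * ‖Matrix.toEuclideanLin B (x - xt)‖ := by
  set T := Matrix.toEuclideanLin B with hT
  set z := T (x - xt) with hz
  -- T applied to nonzero vectors is nonzero
  have hTnz : ∀ v : Metric.sphere (0 : EuclideanSpace ℝ (Fin d)) 1,
      T (v : EuclideanSpace ℝ (Fin d)) ≠ 0 := by
    intro v hv0
    have hvne : (v : EuclideanSpace ℝ (Fin d)) ≠ 0 := ne_zero_of_mem_unit_sphere v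
    have hvne' : (WithLp.equiv 2 (Fin d → ℝ)) (v : EuclideanSpace ℝ (Fin d)) ≠ 0 := by
      simpa using hvne
    have hpos := hB.dotProduct_mulVec_pos hvne'
    rw [Matrix.toEuclideanLin_apply] at hv0
    have hmv : B.mulVec ((WithLp.equiv 2 (Fin d → ℝ)) (v : EuclideanSpace ℝ (Fin d))) = 0 := by
      have := congrArg (WithLp.equiv 2 (Fin d → ℝ)) hv0
      simpa using this
    rw [hmv] at hpos
    simp at hpos
  -- continuity of v ↦ T v on the sphere
  have hTcont : Continuous fun v : Metric.sphere (0 : EuclideanSpace ℝ (Fin d)) 1 =>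
      T (v : EuclideanSpace ℝ (Fin d)) :=
    T.continuous_of_finiteDimensional.comp continuous_subtype_val
  -- the normalized direction field and continuity of the quadratic form integrand
  have hucont : ∀ ζ : EuclideanSpace ℝ (Fin d),
      Continuous fun v : Metric.sphere (0 : EuclideanSpace ℝ (Fin d)) 1 =>
        (⟪ζ, ‖T (v : EuclideanSpace ℝ (Fin d))‖⁻¹ • T (v : EuclideanSpace ℝ (Fin d))⟫ : ℝ) ^ 2 := by
    intro ζ
    apply Continuous.pow
    exact continuous_const.inner (((hTcont.norm).inv₀ (fun v => norm_ne_zero_iff.mpr (hTnz v))).smul hTcont)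
  -- pointwise bound |⟪ζ, u⟫|² ≤ ‖ζ‖²
  have hptb : ∀ (ζ : EuclideanSpace ℝ (Fin d)) (v : Metric.sphere (0 : EuclideanSpace ℝ (Fin d)) 1),
      (⟪ζ, ‖T (v : EuclideanSpace ℝ (Fin d))‖⁻¹ • T (v : EuclideanSpace ℝ (Fin d))⟫ : ℝ) ^ 2 ≤ ‖ζ‖ ^ 2 := by
    intro ζ v
    have h1 : ‖(‖T (v : EuclideanSpace ℝ (Fin d))‖⁻¹ • T (v : EuclideanSpace ℝ (Fin d)))‖ = 1 := by
      rw [norm_smul, norm_inv, norm_norm, inv_mul_cancel₀ (norm_ne_zero_iff.mpr (hTnz v))]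
    calc (⟪ζ, ‖T (v : EuclideanSpace ℝ (Fin d))‖⁻¹ • T (v : EuclideanSpace ℝ (Fin d))⟫ : ℝ) ^ 2
        = |⟪ζ, ‖T (v : EuclideanSpace ℝ (Fin d))‖⁻¹ • T (v : EuclideanSpace ℝ (Fin d))⟫| ^ 2 := by
          rw [sq_abs]
      _ ≤ (‖ζ‖ * 1) ^ 2 := by
          apply pow_le_pow_left₀ (abs_nonneg _)
          have := abs_real_inner_le_norm ζ (‖T (v : EuclideanSpace ℝ (Fin d))‖⁻¹ • T (v : EuclideanSpace ℝ (Fin d)))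
          rwa [h1] at this
      _ = ‖ζ‖ ^ 2 := by ring
  -- integrability
  have hint : ∀ ζ : EuclideanSpace ℝ (Fin d),
      Integrable (fun v : Metric.sphere (0 : EuclideanSpace ℝ (Fin d)) 1 =>
        (⟪ζ, ‖T (v : EuclideanSpace ℝ (Fin d))‖⁻¹ • T (v : EuclideanSpace ℝ (Fin d))⟫ : ℝ) ^ 2) τ := by
    intro ζ
    refine Integrable.mono' (g := fun _ => ‖ζ‖ ^ 2) (integrable_const _)
      ((hucont ζ).aestronglyMeasurable) ?_
    filter_upwards with v
    rw [Real.norm_eq_abs, abs_of_nonneg (sq_nonneg _)]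
    exact hptb ζ v
  -- all integrals are nonneg, so the iInf is bounded below
  have hbdd : BddBelow (Set.range fun ζ : {ζ : EuclideanSpace ℝ (Fin d) // ‖ζ‖ = 1} =>
      ∫ v, (⟪(ζ : EuclideanSpace ℝ (Fin d)),
        ‖T (v : EuclideanSpace ℝ (Fin d))‖⁻¹ • T (v : EuclideanSpace ℝ (Fin d))⟫ : ℝ) ^ 2 ∂τ) := by
    refine ⟨0, ?_⟩
    rintro r ⟨ζ, rfl⟩
    exact integral_nonneg fun v => sq_nonneg _
  -- the infimum is nonnegative, hence so is ρ
  haveI : Nonempty {ζ : EuclideanSpace ℝ (Fin d) // ‖ζ‖ = 1} :=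
    ⟨⟨EuclideanSpace.single (⟨0, hd⟩ : Fin d) (1:ℝ), by simp⟩⟩
  have hρ0 : 0 ≤ ρ := by
    rw [hρ]
    have h0 : (0:ℝ) ≤ ⨅ ζ : {ζ : EuclideanSpace ℝ (Fin d) // ‖ζ‖ = 1},
        ∫ v, (⟪(ζ : EuclideanSpace ℝ (Fin d)),
          ‖T (v : EuclideanSpace ℝ (Fin d))‖⁻¹ • T (v : EuclideanSpace ℝ (Fin d))⟫ : ℝ) ^ 2 ∂τ :=
      le_ciInf fun ζ => integral_nonneg fun v => sq_nonneg _
    linarith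
  rcases eq_or_ne z 0 with hz0 | hz0
  · rw [hz0]
    simp
  · have hzn : ‖z‖ ≠ 0 := norm_ne_zero_iff.mpr hz0
    set ζ0 : EuclideanSpace ℝ (Fin d) := ‖z‖⁻¹ • z with hζ0def
    have hζ0 : ‖ζ0‖ = 1 := norm_smul_inv_norm hz0
    set I : ℝ := ∫ v, (⟪ζ0,
        ‖T (v : EuclideanSpace ℝ (Fin d))‖⁻¹ • T (v : EuclideanSpace ℝ (Fin d))⟫ : ℝ) ^ 2 ∂τ with hIdef
    have hIinf : (⨅ ζ : {ζ : EuclideanSpace ℝ (Fin d) // ‖ζ‖ = 1},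
        ∫ v, (⟪(ζ : EuclideanSpace ℝ (Fin d)),
          ‖T (v : EuclideanSpace ℝ (Fin d))‖⁻¹ • T (v : EuclideanSpace ℝ (Fin d))⟫ : ℝ) ^ 2 ∂τ) ≤ I :=
      ciInf_le hbdd ⟨ζ0, hζ0⟩
    have hρle : ρ ≤ (1 / 2) * I := by
      rw [hρ]; linarith
    have hI0 : 0 ≤ I := integral_nonneg fun v => sq_nonneg _
    have hI1 : I ≤ 1 := by
      calc I ≤ ∫ _v, (1:ℝ) ∂τ := by
            refine integral_mono (hint ζ0) (integrable_const 1) fun v => ?_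
            have := hptb ζ0 v
            rwa [hζ0, one_pow] at this
        _ = 1 := by simp
    have hρhalf : ρ ≤ 1 / 2 := le_trans hρle (by linarith)
    -- pointwise identity
    have key : ∀ v : Metric.sphere (0 : EuclideanSpace ℝ (Fin d)) 1,
        ‖z - (⟪z, T (v : EuclideanSpace ℝ (Fin d))⟫ / ‖T (v : EuclideanSpace ℝ (Fin d))‖ ^ 2) •
            T (v : EuclideanSpace ℝ (Fin d))‖ ^ 2
          = ‖z‖ ^ 2 * (1 - (⟪ζ0,
              ‖T (v : EuclideanSpace ℝ (Fin d))‖⁻¹ • T (v : EuclideanSpace ℝ (Fin d))⟫ : ℝ) ^ 2) := by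
      intro v
      have hw : ‖T (v : EuclideanSpace ℝ (Fin d))‖ ≠ 0 := norm_ne_zero_iff.mpr (hTnz v)
      simp only [hζ0def, norm_sub_sq_real, real_inner_smul_right, real_inner_smul_left,
        norm_smul, Real.norm_eq_abs, mul_pow, sq_abs]
      field_simp
      ring
    have hInt : (∫ v, ‖z - (⟪z, T (v : EuclideanSpace ℝ (Fin d))⟫ /
          ‖T (v : EuclideanSpace ℝ (Fin d))‖ ^ 2) • T (v : EuclideanSpace ℝ (Fin d))‖ ^ 2 ∂τ)
        = ‖z‖ ^ 2 * (1 - I) := by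
      calc (∫ v, ‖z - (⟪z, T (v : EuclideanSpace ℝ (Fin d))⟫ /
            ‖T (v : EuclideanSpace ℝ (Fin d))‖ ^ 2) • T (v : EuclideanSpace ℝ (Fin d))‖ ^ 2 ∂τ)
          = ∫ v, ‖z‖ ^ 2 * (1 - (⟪ζ0,
              ‖T (v : EuclideanSpace ℝ (Fin d))‖⁻¹ • T (v : EuclideanSpace ℝ (Fin d))⟫ : ℝ) ^ 2) ∂τ := by
            exact integral_congr_ae (Filter.Eventually.of_forall key)
        _ = ‖z‖ ^ 2 * ∫ v, (1 - (⟪ζ0,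
              ‖T (v : EuclideanSpace ℝ (Fin d))‖⁻¹ • T (v : EuclideanSpace ℝ (Fin d))⟫ : ℝ) ^ 2) ∂τ :=
            integral_const_mul _ _
        _ = ‖z‖ ^ 2 * (1 - I) := by
            rw [integral_sub (integrable_const 1) (hint ζ0)]
            simp [hIdef]
    rw [hInt]
    have hle1 : ‖z‖ ^ 2 * (1 - I) ≤ ((1 - ρ) * ‖z‖) ^ 2 := by
      nlinarith [sq_nonneg ‖z‖, sq_nonneg ρ, sq_nonneg (ρ * ‖z‖)]
    calc Real.sqrt (‖z‖ ^ 2 * (1 - I)) ≤ Real.sqrt (((1 - ρ) * ‖z‖) ^ 2) :=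
          Real.sqrt_le_sqrt hle1
      _ = (1 - ρ) * ‖z‖ := Real.sqrt_sq (mul_nonneg (by linarith) (norm_nonneg z))
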